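/- The formula ¬▲p → ▲¬▲p is valid on the class of symmetric and Euclidean frames. -/

import Mathlib

def satBox {S : Type*} (R : S → S → Prop) (φ : S → Prop) (s : S) : Prop :=
  ∀ t, R s t → φ t

def satTri {S : Type*} (R : S → S → Prop) (φ : S → Prop) (s : S) : Prop :=
  (φ s → ∀ t, R s t → φ t) ∧ (¬ φ s → ∀ t, R s t → ¬ φ t)

def satNab {S : Type*} (R : S → S → Prop) (φ : S → Prop) (s : S) : Prop :=
  ∀ t₁ t₂, R s t₁ → R s t₂ → (φ t₁ ↔ φ t₂)

theorem stmt17 {S : Type*} [Nonempty S] (R : S → S → Prop)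
    (hsym : ∀ x y, R x y → R y x)
    (heucl : ∀ x y z, R x y → R x z → R y z)
    (p : S → Prop) (s : S) :
    ¬ satTri R p s → satTri R (fun w => ¬ satTri R p w) s := by
  intro h
  constructor
  · intro _ t hst hTt
    -- from ¬ satTri R p s get a witness t₁ with R s t₁ and p t₁ ↔ ¬ p s
    unfold satTri at h
    rw [not_and_or] at h
    rcases h with h | h <;> push_neg at h
    case inl =>
      rcases h with ⟨hps, t₁, hst₁, hpt₁⟩
      rcases Classical.em (p t) with hpt | hnpt
      · exact hpt₁ (hTt.1 hpt t₁ (heucl s t t₁ hst hst₁))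
      · exact hTt.2 hnpt s (hsym s t hst) hps
    case inr =>
      rcases h with ⟨hnps, t₁, hst₁, hpt₁⟩
      rcases Classical.em (p t) with hpt | hnpt
      · exact hnps (hTt.1 hpt s (hsym s t hst))
      · exact hTt.2 hnpt t₁ (heucl s t t₁ hst hst₁) hpt₁
  · intro hnn
    exact absurd h hnn
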